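/- Let α = 2√3 − 3, γ = (3−√3)/2, and define f(x,y) := x²/2 + (γ − x)(1 − γ − y) + min{ y²/2 + y(1 − γ − y), (α/2)(1−γ)² }. Then for all (x,y) ∈ [0, γ] × [0, 1−γ]: f(x,y) + (γ − x)(x + y)/10 ≤ α/2. -/

import Mathlib

open scoped Classical

noncomputable section

/-- The constant `α = 2√3 − 3`. -/
def alphaC : ℝ := 2 * Real.sqrt 3 - 3

/-- The constant `γ = (3 − √3)/2`. -/
def gammaC : ℝ := (3 - Real.sqrt 3) / 2

/-- The function `f(x,y)` from Proposition 6.2 of the paper. -/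
def fxy (x y : ℝ) : ℝ :=
  x ^ 2 / 2 + (gammaC - x) * (1 - gammaC - y) +
    min (y ^ 2 / 2 + y * (1 - gammaC - y)) ((alphaC / 2) * (1 - gammaC) ^ 2)

set_option maxHeartbeats 1000000 in
/-- **Proposition (the inequality for `f(x,y)`).** For all `(x,y) ∈ [0,γ] × [0,1−γ]`,
`f(x,y) + (γ − x)(x + y)/10 ≤ α/2`. -/
theorem inequality_fxy (x y : ℝ) (hx : x ∈ Set.Icc (0 : ℝ) gammaC)
    (hy : y ∈ Set.Icc (0 : ℝ) (1 - gammaC)) :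
    fxy x y + (gammaC - x) * (x + y) / 10 ≤ alphaC / 2 := by
  obtain ⟨hx0, hx1⟩ := hx
  obtain ⟨hy0, hy1⟩ := hy
  have hs : Real.sqrt 3 ^ 2 = 3 := Real.sq_sqrt (by norm_num)
  have hs0 : (0:ℝ) ≤ Real.sqrt 3 := Real.sqrt_nonneg 3
  have hs1 : (1.7:ℝ) ≤ Real.sqrt 3 := by nlinarith
  have hs2 : Real.sqrt 3 ≤ 1.8 := by nlinarith
  set s := Real.sqrt 3 with hsdef
  simp only [fxy, alphaC, gammaC] at *
  have hgx : 0 ≤ (3 - s) / 2 - x := by linarith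
  rcases le_total (y ^ 2 / 2 + y * (1 - (3 - s) / 2 - y))
      (((2 * s - 3) / 2) * (1 - (3 - s) / 2) ^ 2) with h | h
  · rw [min_eq_left h]
    have hD : 0 ≤ ((2 * s - 3) / 2) * (1 - (3 - s) / 2) ^ 2 -
        (y ^ 2 / 2 + y * (1 - (3 - s) / 2 - y)) := sub_nonneg.2 h
    nlinarith [mul_nonneg hx0 hD, mul_nonneg hgx hD, mul_nonneg hy0 hD,
      mul_nonneg hx0 hy0, mul_nonneg hgx hy0, mul_nonneg hgx hx0,
      sq_nonneg (x - y), sq_nonneg (x + y), sq_nonneg x, sq_nonneg y]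
  · rw [min_eq_right h]
    have hs3 : (1.732:ℝ) ≤ s := by nlinarith
    have hs4 : s ≤ 1.7321 := by nlinarith
    have hc : ((2 * s - 3) / 2) * (1 - (3 - s) / 2) ^ 2 = (7 * s - 12) / 4 := by
      linear_combination ((2 * s - 7) / 8) * hs
    rw [hc] at h
    have hy2 : (0.08:ℝ) ≤ y := by
      nlinarith [mul_nonneg hy0 (sub_nonneg.2 hs4), sq_nonneg y]
    have hst : 0 ≤ 1.85 + 0.9 * y - 0.95 * s - 0.4 * ((3 - s) / 2 - x) := by linarith
    nlinarith [mul_nonneg hgx hst, hs, hc]
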